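/- Let α ∈ (0,2], let C > 0 and ρ > 0, and let (a_k)_{k≥1} be complex numbers with |a_k| ≤ C·ρ^{k}·k^{α−1} for every k ≥ 1. Set τ = ρ^{−1/α}. Then for every t ∈ (0,τ) and every integer n₀ ≥ 1 satisfying n₀ ≥ (α−1)/(α·log(τ/t)): Σ_{k ≥ n₀+1} |a_k| t^{αk} ≤ (C·n₀^{α−1} / (α·log(τ/t))) · (t/τ)^{n₀ α} · (1 + max(α−1,0)/(α·n₀·log(τ/t))). -/

import Mathlib

open Finset

set_option maxHeartbeats 1600000 in
theorem stmt_11 (α : ℝ) (hα : 0 < α) (hα2 : α ≤ 2)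
    (C ρ : ℝ) (hC : 0 < C) (hρ : 0 < ρ)
    (a : ℕ → ℂ)
    (hbound : ∀ k : ℕ, 1 ≤ k → ‖a k‖ ≤ C * ρ ^ k * (k:ℝ) ^ (α - 1))
    (τ : ℝ) (hτ : τ = ρ ^ (-(1/α)))
    (t : ℝ) (ht0 : 0 < t) (ht : t < τ)
    (n₀ : ℕ) (hn₀ : 1 ≤ n₀)
    (hn₀' : (α - 1) / (α * Real.log (τ / t)) ≤ (n₀:ℝ)) :
    (∑' k : ℕ, ‖a (n₀ + 1 + k)‖ * t ^ (α * ((n₀ + 1 + k : ℕ) : ℝ))) ≤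
      (C * (n₀:ℝ) ^ (α - 1) / (α * Real.log (τ / t))) * (t/τ) ^ ((n₀:ℝ) * α) *
        (1 + max (α - 1) 0 / (α * (n₀:ℝ) * Real.log (τ / t))) := by
  have hτ0 : 0 < τ := hτ ▸ Real.rpow_pos_of_pos hρ _
  set L := α * Real.log (τ / t) with hLdef
  have hlog : 0 < Real.log (τ / t) := Real.log_pos ((one_lt_div ht0).mpr ht)
  have hL0 : 0 < L := mul_pos hα hlog
  set q := (t / τ) ^ α with hqdef
  have htτ0 : 0 < t / τ := div_pos ht0 hτ0
  have hq0 : 0 < q := Real.rpow_pos_of_pos htτ0 _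
  have hqexp : q = Real.exp (-L) := by
    rw [hqdef, Real.rpow_def_of_pos htτ0, hLdef]
    congr 1
    rw [Real.log_div ht0.ne' hτ0.ne', Real.log_div hτ0.ne' ht0.ne']
    ring
  have hq1 : q < 1 := by
    rw [hqexp, Real.exp_lt_one_iff]; linarith
  have h1q : 0 < 1 - q := by linarith
  -- key scalar inequalities
  have hkey1 : q * L ≤ 1 - q := by
    have h1 : Real.exp (-L) * Real.exp L = 1 := by rw [← Real.exp_add]; simp
    have h2 := Real.add_one_le_exp L
    have h3 := Real.exp_pos (-L)
    rw [hqexp]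
    nlinarith [mul_le_mul_of_nonneg_left h2 h3.le]
  have hkey2 : q * L ^ 2 ≤ (1 - q) ^ 2 := by
    have hs : L / 2 < Real.sinh (L / 2) := Real.self_lt_sinh_iff.mpr (by linarith)
    rw [Real.sinh_eq] at hs
    have h1 : Real.exp (-(L/2)) * Real.exp (L/2) = 1 := by rw [← Real.exp_add]; simp
    have h2 : Real.exp (-(L/2)) * Real.exp (-(L/2)) = q := by
      rw [hqexp, ← Real.exp_add]; ring_nf
    have h3 := Real.exp_pos (-(L/2))
    have h5' := mul_lt_mul_of_pos_left hs h3
    have h5 : Real.exp (-(L/2)) * L ≤ 1 - q := by nlinarith [h5']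
    have h6 : (0:ℝ) ≤ Real.exp (-(L/2)) * L := by positivity
    calc q * L ^ 2 = (Real.exp (-(L/2)) * L) ^ 2 := by rw [← h2]; ring
      _ ≤ (1 - q) ^ 2 := by nlinarith [mul_self_le_mul_self h6 h5]
  -- q = ρ * t ^ α
  have hτα : τ ^ α = ρ⁻¹ := by
    rw [hτ, ← Real.rpow_mul hρ.le,
      show -(1/α) * α = -1 by rw [neg_mul, one_div, inv_mul_cancel₀ hα.ne'],
      Real.rpow_neg_one]
  have hqρ : q = ρ * t ^ α := by
    rw [hqdef, Real.div_rpow ht0.le hτ0.le, hτα, div_eq_mul_inv, inv_inv]; ring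
  have hRq : (t/τ) ^ ((n₀:ℝ) * α) = q ^ n₀ := by
    rw [mul_comm, Real.rpow_mul htτ0.le, Real.rpow_natCast]
  clear_value q L
  -- notation
  have hn0R : (1:ℝ) ≤ (n₀:ℝ) := by exact_mod_cast hn₀
  have hnpos : (0:ℝ) < (n₀:ℝ) := by linarith
  set M := max (α - 1) 0 with hMdef
  have hM0 : 0 ≤ M := le_max_right _ _
  set A := (n₀:ℝ) ^ (α - 1) with hAdef
  have hApos : 0 < A := Real.rpow_pos_of_pos hnpos _
  have hA2 : (n₀:ℝ) ^ (α - 2) = A * (n₀:ℝ)⁻¹ := by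
    rw [hAdef, ← Real.rpow_neg_one, ← Real.rpow_add hnpos]; congr 1; ring
  clear_value M A
  -- pointwise power bound
  have hpow : ∀ m : ℕ, n₀ ≤ m →
      (m:ℝ) ^ (α - 1) ≤ A + M * ((n₀:ℝ) ^ (α - 2)) * ((m:ℝ) - (n₀:ℝ)) := by
    intro m hm
    have hmR : (n₀:ℝ) ≤ (m:ℝ) := by exact_mod_cast hm
    rcases le_or_gt α 1 with h1 | h1
    · have hM : M = 0 := by rw [hMdef]; exact max_eq_right (by linarith)
      rw [hM, hAdef]
      simpa using Real.rpow_le_rpow_of_nonpos hnpos hmR (by linarith)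
    · have hMeq : M = α - 1 := by rw [hMdef]; exact max_eq_left (by linarith)
      set s : ℝ := ((m:ℝ) - (n₀:ℝ)) / (n₀:ℝ) with hs
      have hs0 : 0 ≤ s := div_nonneg (by linarith) hnpos.le
      have hb : (1 + s) ^ (α - 1) ≤ 1 + (α - 1) * s :=
        rpow_one_add_le_one_add_mul_self (by linarith) (by linarith) (by linarith)
      have hms : (m:ℝ) = (n₀:ℝ) * (1 + s) := by
        rw [hs]; field_simp; ring
      calc (m:ℝ) ^ (α - 1) = A * (1 + s) ^ (α - 1) := by
            rw [hms, Real.mul_rpow hnpos.le (by linarith), hAdef]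
        _ ≤ A * (1 + (α - 1) * s) := mul_le_mul_of_nonneg_left hb hApos.le
        _ = A + M * (A * (n₀:ℝ)⁻¹) * ((m:ℝ) - (n₀:ℝ)) := by
            rw [hs, hMeq]; field_simp
        _ = _ := by rw [hA2]
  -- termwise bound
  set g : ℕ → ℝ := fun k => C * (A + M * ((n₀:ℝ) ^ (α - 2)) * ((k:ℝ) + 1)) *
      (q ^ (n₀ + 1) * q ^ k) with hgdef
  have hf_le : ∀ k : ℕ, ‖a (n₀ + 1 + k)‖ * t ^ (α * ((n₀ + 1 + k : ℕ) : ℝ)) ≤ g k := by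
    intro k
    set m := n₀ + 1 + k with hm
    have hm1 : 1 ≤ m := by omega
    have htpow : t ^ (α * ((m:ℕ):ℝ)) = (t ^ α) ^ m := by
      rw [Real.rpow_mul ht0.le, Real.rpow_natCast]
    have htpos : (0:ℝ) < (t ^ α) ^ m := pow_pos (Real.rpow_pos_of_pos ht0 _) _
    have h1 : ‖a m‖ * t ^ (α * ((m:ℕ):ℝ)) ≤ C * ρ ^ m * (m:ℝ) ^ (α - 1) * (t ^ α) ^ m := by
      rw [htpow]
      exact mul_le_mul_of_nonneg_right (hbound m hm1) htpos.le
    have h2 : C * ρ ^ m * (m:ℝ) ^ (α - 1) * (t ^ α) ^ m = C * (m:ℝ) ^ (α - 1) * q ^ m := by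
      rw [hqρ, mul_pow]; ring
    have h3 : (m:ℝ) ^ (α - 1) ≤ A + M * ((n₀:ℝ) ^ (α - 2)) * ((k:ℝ) + 1) := by
      have h := hpow m (by omega)
      have hcast : ((m:ℕ):ℝ) - (n₀:ℝ) = (k:ℝ) + 1 := by
        rw [hm]; push_cast; ring
      rwa [hcast] at h
    have hqposm : (0:ℝ) < q ^ (n₀ + 1) * q ^ k :=
      mul_pos (pow_pos hq0 _) (pow_pos hq0 _)
    calc ‖a m‖ * t ^ (α * ((m:ℕ):ℝ)) ≤ C * (m:ℝ) ^ (α - 1) * q ^ m := by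
          rw [← h2]; exact h1
      _ ≤ g k := by
          rw [hgdef]
          have hqm : q ^ m = q ^ (n₀ + 1) * q ^ k := by rw [hm, pow_add]
          rw [hqm]
          have hmul := mul_le_mul_of_nonneg_right h3 hqposm.le
          calc C * (m:ℝ) ^ (α - 1) * (q ^ (n₀ + 1) * q ^ k)
              = (m:ℝ) ^ (α - 1) * (q ^ (n₀ + 1) * q ^ k) * C := by ring
            _ ≤ (A + M * ((n₀:ℝ) ^ (α - 2)) * ((k:ℝ) + 1)) * (q ^ (n₀ + 1) * q ^ k) * C :=
                mul_le_mul_of_nonneg_right hmul hC.le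
            _ = C * (A + M * ((n₀:ℝ) ^ (α - 2)) * ((k:ℝ) + 1)) * (q ^ (n₀ + 1) * q ^ k) := by
                ring
  -- summability
  have hqnorm : ‖q‖ < 1 := by rw [Real.norm_eq_abs, abs_of_pos hq0]; exact hq1
  have s1 : Summable fun k : ℕ => q ^ k := summable_geometric_of_lt_one hq0.le hq1
  have s2 : Summable fun k : ℕ => (k:ℝ) * q ^ k := by
    have h := summable_pow_mul_geometric_of_norm_lt_one (R := ℝ) 1 hqnorm
    simpa using h
  set c₁ : ℝ := C * A * q ^ (n₀ + 1) with hc₁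
  set c₂ : ℝ := C * (M * ((n₀:ℝ) ^ (α - 2))) * q ^ (n₀ + 1) with hc₂
  have hgsplit : g = fun k : ℕ =>
      c₁ * q ^ k + (c₂ * ((k:ℝ) * q ^ k) + c₂ * q ^ k) := by
    funext k; rw [hgdef, hc₁, hc₂]; ring
  have sg : Summable g := by
    rw [hgsplit]
    exact (s1.mul_left c₁).add ((s2.mul_left c₂).add (s1.mul_left c₂))
  have hf_nonneg : ∀ k : ℕ, 0 ≤ ‖a (n₀ + 1 + k)‖ * t ^ (α * ((n₀ + 1 + k : ℕ) : ℝ)) := by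
    intro k
    have h : (0:ℝ) ≤ t ^ (α * ((n₀ + 1 + k : ℕ) : ℝ)) := (Real.rpow_pos_of_pos ht0 _).le
    positivity
  have sf : Summable fun k : ℕ => ‖a (n₀ + 1 + k)‖ * t ^ (α * ((n₀ + 1 + k : ℕ) : ℝ)) :=
    Summable.of_nonneg_of_le hf_nonneg hf_le sg
  have hstep1 : (∑' k : ℕ, ‖a (n₀ + 1 + k)‖ * t ^ (α * ((n₀ + 1 + k : ℕ) : ℝ))) ≤ ∑' k, g k :=
    Summable.tsum_le_tsum hf_le sf sg
  -- compute tsum g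
  have htsum1 : (∑' k : ℕ, q ^ k) = (1 - q)⁻¹ := tsum_geometric_of_lt_one hq0.le hq1
  have htsum2 : (∑' k : ℕ, (k:ℝ) * q ^ k) = q / (1 - q) ^ 2 := by
    have h := tsum_coe_mul_geometric_of_norm_lt_one (𝕜 := ℝ) hqnorm
    simpa using h
  have htsumg : (∑' k, g k) = c₁ * (1 - q)⁻¹ + (c₂ * (q / (1 - q) ^ 2) + c₂ * (1 - q)⁻¹) := by
    rw [hgsplit]
    rw [Summable.tsum_add (s1.mul_left c₁) ((s2.mul_left c₂).add (s1.mul_left c₂)),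
      Summable.tsum_add (s2.mul_left c₂) (s1.mul_left c₂),
      tsum_mul_left, tsum_mul_left, tsum_mul_left, htsum1, htsum2]
  -- final arithmetic
  have e1 : q / (1 - q) ≤ 1 / L := by
    rw [div_le_div_iff₀ h1q hL0]; nlinarith [hkey1]
  have e2 : q / (1 - q) ^ 2 ≤ 1 / L ^ 2 := by
    rw [div_le_div_iff₀ (by positivity) (by positivity)]; nlinarith [hkey2]
  have hfinal : c₁ * (1 - q)⁻¹ + (c₂ * (q / (1 - q) ^ 2) + c₂ * (1 - q)⁻¹) ≤
      (C * A / L) * q ^ n₀ * (1 + M / ((n₀:ℝ) * L)) := by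
    have hlhs : c₁ * (1 - q)⁻¹ + (c₂ * (q / (1 - q) ^ 2) + c₂ * (1 - q)⁻¹) =
        C * q ^ n₀ * (A * (q / (1 - q)) + (M * ((n₀:ℝ) ^ (α - 2))) * (q / (1 - q) ^ 2)) := by
      rw [hc₁, hc₂, pow_succ]
      field_simp
      ring
    have hrhs : (C * A / L) * q ^ n₀ * (1 + M / ((n₀:ℝ) * L)) =
        C * q ^ n₀ * (A * (1 / L) + (M * ((n₀:ℝ) ^ (α - 2))) * (1 / L ^ 2)) := by
      rw [hA2]
      field_simp
    rw [hlhs, hrhs]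
    have hB0 : 0 ≤ M * ((n₀:ℝ) ^ (α - 2)) := by positivity
    have h := add_le_add (mul_le_mul_of_nonneg_left e1 hApos.le)
      (mul_le_mul_of_nonneg_left e2 hB0)
    have hCq : (0:ℝ) ≤ C * q ^ n₀ := by positivity
    exact mul_le_mul_of_nonneg_left h hCq
  refine hstep1.trans ?_
  rw [htsumg]
  refine hfinal.trans_eq ?_
  rw [hRq, hLdef]
  ring
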